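/- Let V be the space of square-integrable functions from [0,∞) to ℝⁿ with L² norm ‖·‖₂. Let G, Δ : V → V be maps and γ₁, γ₂, β₁, β₂ ≥ 0 be constants such that ‖G(x)‖₂ ≤ γ₁‖x‖₂ + β₁ and ‖Δ(x)‖₂ ≤ γ₂‖x‖₂ + β₂ for all x ∈ V, and suppose γ₁γ₂ < 1. If v, w, e₁, e₂ ∈ V satisfy the feedback equations v = G(w + e₁) and w = Δ(v + e₂), then ‖v‖₂ ≤ (γ₁‖e₁‖₂ + γ₁γ₂‖e₂‖₂ + γ₁β₂ + β₁)/(1 − γ₁γ₂) and ‖w‖₂ ≤ (γ₁γ₂‖e₁‖₂ + γ₂‖e₂‖₂ + γ₂β₁ + β₂)/(1 − γ₁γ₂). (Small Gain Theorem: the feedback interconnection of two finite-gain L₂-stable operators with loop gain γ₁γ₂ < 1 is internally stable.) -/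
import Mathlib

open MeasureTheory

/-- **Small Gain Theorem** for finite-gain `L²`-stable operators on the space
`V = L²([0,∞), ℝⁿ)` of square-integrable functions on `[0,∞)`. -/
theorem small_gain_theorem (n : ℕ)
    (G Δ : Lp (α := ℝ) (EuclideanSpace ℝ (Fin n)) 2 (volume.restrict (Set.Ici (0 : ℝ))) →
      Lp (α := ℝ) (EuclideanSpace ℝ (Fin n)) 2 (volume.restrict (Set.Ici (0 : ℝ))))
    (γ₁ γ₂ β₁ β₂ : ℝ) (hγ₁ : 0 ≤ γ₁) (hγ₂ : 0 ≤ γ₂) (hβ₁ : 0 ≤ β₁) (hβ₂ : 0 ≤ β₂)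
    (hG : ∀ x, ‖G x‖ ≤ γ₁ * ‖x‖ + β₁)
    (hΔ : ∀ x, ‖Δ x‖ ≤ γ₂ * ‖x‖ + β₂)
    (hloop : γ₁ * γ₂ < 1)
    (v w e₁ e₂ : Lp (α := ℝ) (EuclideanSpace ℝ (Fin n)) 2 (volume.restrict (Set.Ici (0 : ℝ))))
    (hv : v = G (w + e₁)) (hw : w = Δ (v + e₂)) :
    ‖v‖ ≤ (γ₁ * ‖e₁‖ + γ₁ * γ₂ * ‖e₂‖ + γ₁ * β₂ + β₁) / (1 - γ₁ * γ₂) ∧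
    ‖w‖ ≤ (γ₁ * γ₂ * ‖e₁‖ + γ₂ * ‖e₂‖ + γ₂ * β₁ + β₂) / (1 - γ₁ * γ₂) := by
  have hpos : 0 < 1 - γ₁ * γ₂ := by linarith
  have h1 : ‖v‖ ≤ γ₁ * (‖w‖ + ‖e₁‖) + β₁ := by
    calc ‖v‖ ≤ γ₁ * ‖w + e₁‖ + β₁ := by rw [hv]; exact hG _
    _ ≤ γ₁ * (‖w‖ + ‖e₁‖) + β₁ := by
        have := norm_add_le w e₁
        nlinarith
  have h2 : ‖w‖ ≤ γ₂ * (‖v‖ + ‖e₂‖) + β₂ := by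
    calc ‖w‖ ≤ γ₂ * ‖v + e₂‖ + β₂ := by rw [hw]; exact hΔ _
    _ ≤ γ₂ * (‖v‖ + ‖e₂‖) + β₂ := by
        have := norm_add_le v e₂
        nlinarith
  constructor
  · rw [le_div_iff₀ hpos]; nlinarith
  · rw [le_div_iff₀ hpos]; nlinarith
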